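/- Let X be an L-dimensional standard Gaussian random vector shifted by mean vector μ, i.e., X = μ + Z with Z ~ N(0, I_L). For the blockwise James–Stein estimator \hat{θ}(λ)(x) = (1 − λ/‖x‖²)_+ x with λ ≥ 0, Stein's identity gives E‖\hat{θ}(λ)(X) − μ‖² = E[ L + ((λ² − 2λ(L−2))/‖X‖²)·1{‖X‖² > λ} + (‖X‖² − 2L)·1{‖X‖² ≤ λ} ]. -/

import Mathlib

open MeasureTheory ProbabilityTheory Real Filter Set intervalIntegral
open scoped NNReal ENNReal Topology

/-! ### Volume-level integrability helpers -/

lemma int_exp_gauss : Integrable (fun t : ℝ => Real.exp (-(t^2/2))) := by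
  have h : ∀ t : ℝ, -(1/2 : ℝ) * t^2 = -(t^2/2) := fun t => by ring
  have := integrable_exp_neg_mul_sq (by norm_num : (0:ℝ) < 1/2)
  simpa only [h] using this

lemma int_abs_exp_gauss : Integrable (fun t : ℝ => |t| * Real.exp (-(t^2/2))) := by
  have h : ∀ t : ℝ, -(1/2 : ℝ) * t^2 = -(t^2/2) := fun t => by ring
  have := (integrable_rpow_mul_exp_neg_mul_sq (by norm_num : (0:ℝ) < 1/2)
    (by norm_num : (-1:ℝ) < 1)).abs
  simp only [Real.rpow_one, abs_mul, Real.abs_exp, h] at this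
  exact this

lemma int_sq_exp_gauss : Integrable (fun t : ℝ => t^2 * Real.exp (-(t^2/2))) := by
  have h : ∀ t : ℝ, -(1/2 : ℝ) * t^2 = -(t^2/2) := fun t => by ring
  have h2 : ∀ t : ℝ, t ^ ((2:ℕ):ℝ) = t ^ (2:ℕ) := fun t => Real.rpow_natCast t 2
  have := integrable_rpow_mul_exp_neg_mul_sq (by norm_num : (0:ℝ) < 1/2)
    (by norm_num : (-1:ℝ) < ((2:ℕ):ℝ))
  simp only [h, h2] at this
  exact this

/-- FTC allowing a finite exceptional set for differentiability. -/
lemma ftc_finite_exceptions {G w : ℝ → ℝ} (hG : Continuous G) (hw : Integrable w volume)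
    {u : Set ℝ} (hu : u.Finite) :
    ∀ a b : ℝ, (∀ x ∈ Set.Ioo (min a b) (max a b), x ∉ u → HasDerivAt G (w x) x) →
      ∫ y in a..b, w y = G b - G a := by
  refine Set.Finite.induction_on
    (motive := fun u _ => ∀ a b : ℝ,
      (∀ x ∈ Set.Ioo (min a b) (max a b), x ∉ u → HasDerivAt G (w x) x) →
        ∫ y in a..b, w y = G b - G a) u hu ?_ ?_
  · -- empty
    intro a b hd
    exact integral_eq_sub_of_hasDeriv_right hG.continuousOn
      (fun x hx => (hd x hx (Set.notMem_empty x)).hasDerivWithinAt)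
      hw.intervalIntegrable
  · -- insert
    intro p u hpu hufin IH a b hd
    by_cases hp : p ∈ Set.Ioo (min a b) (max a b)
    · have h1 : ∫ y in a..p, w y = G p - G a := by
        refine IH a p fun x hx hxu => ?_
        have hxp : x ≠ p := by
          rintro rfl
          rcases hx with ⟨h1, h2⟩
          rcases min_lt_iff.mp h1 with h | h
          · rcases lt_max_iff.mp h2 with h' | h' <;> linarith
          · linarith
        have hxin : x ∈ Set.Ioo (min a b) (max a b) := by
          refine Set.Ioo_subset_Ioo ?_ ?_ hx
          · exact le_min (min_le_left _ _) hp.1.le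
          · exact max_le (le_max_left _ _) hp.2.le
        exact hd x hxin (by simp [hxp, hxu])
      have h2 : ∫ y in p..b, w y = G b - G p := by
        refine IH p b fun x hx hxu => ?_
        have hxp : x ≠ p := by
          rintro rfl
          rcases hx with ⟨h1, h2⟩
          rcases min_lt_iff.mp h1 with h | h
          · rcases lt_max_iff.mp h2 with h' | h' <;> linarith
          · rcases lt_max_iff.mp h2 with h' | h' <;> linarith
        have hxin : x ∈ Set.Ioo (min a b) (max a b) := by
          refine Set.Ioo_subset_Ioo ?_ ?_ hx
          · exact le_min hp.1.le (min_le_right _ _)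
          · exact max_le hp.2.le (le_max_right _ _)
        exact hd x hxin (by simp [hxp, hxu])
      rw [← intervalIntegral.integral_add_adjacent_intervals
        hw.intervalIntegrable hw.intervalIntegrable (b := p), h1, h2]
      ring
    · refine IH a b fun x hx hxu => ?_
      have hxp : x ≠ p := fun h => hp (h ▸ hx)
      exact hd x hx (by simp [hxp, hxu])

lemma gaussianPDFReal_std (t : ℝ) :
    gaussianPDFReal 0 1 t = (Real.sqrt (2*Real.pi))⁻¹ * Real.exp (-(t^2/2)) := by
  simp only [gaussianPDFReal, NNReal.coe_one, mul_one, sub_zero]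
  rw [neg_div]

lemma integral_gaussianReal_std (φ : ℝ → ℝ) :
    ∫ t, φ t ∂(gaussianReal 0 1) = ∫ t, gaussianPDFReal 0 1 t * φ t := by
  rw [gaussianReal_of_var_ne_zero _ one_ne_zero]
  have hmeas : Measurable (fun t => Real.toNNReal (gaussianPDFReal 0 1 t)) :=
    (measurable_gaussianPDFReal 0 1).real_toNNReal
  have hrw : (volume.withDensity (gaussianPDF 0 1))
      = volume.withDensity (fun t => ((Real.toNNReal (gaussianPDFReal 0 1 t) : ℝ≥0) : ℝ≥0∞)) := rfl
  rw [hrw, integral_withDensity_eq_integral_smul hmeas]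
  congr 1
  funext t
  rw [NNReal.smul_def, smul_eq_mul, Real.coe_toNNReal _ (gaussianPDFReal_nonneg _ _ _)]

lemma integrable_gaussianReal_iff (φ : ℝ → ℝ) :
    Integrable φ (gaussianReal 0 1)
      ↔ Integrable (fun t => φ t * gaussianPDFReal 0 1 t) volume := by
  rw [gaussianReal_of_var_ne_zero _ one_ne_zero,
    integrable_withDensity_iff (measurable_gaussianPDF 0 1)
      (ae_of_all _ fun t => by rw [gaussianPDF_def]; exact ENNReal.ofReal_lt_top)]
  refine integrable_congr (ae_of_all _ fun t => ?_)
  show φ t * (ENNReal.ofReal (gaussianPDFReal 0 1 t)).toReal = φ t * gaussianPDFReal 0 1 t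
  rw [ENNReal.toReal_ofReal (gaussianPDFReal_nonneg _ _ _)]

lemma stein_gauss {F F' : ℝ → ℝ} {u : Set ℝ} (hu : u.Finite) (hFc : Continuous F)
    (hFd : ∀ t ∉ u, HasDerivAt F (F' t) t) (hF'm : Measurable F') {C : ℝ}
    (hFb : ∀ t, |F t| ≤ C * (1 + |t|)) (hF'b : ∀ t, |F' t| ≤ C) :
    ∫ t, (t * F t - F' t) ∂(gaussianReal 0 1) = 0 := by
  have hC : 0 ≤ C := le_trans (abs_nonneg _) (hF'b 0)
  set G : ℝ → ℝ := fun t => F t * Real.exp (-(t^2/2)) with hGdef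
  set w : ℝ → ℝ := fun t => (F' t - t * F t) * Real.exp (-(t^2/2)) with hwdef
  have hexpc : Continuous (fun t : ℝ => Real.exp (-(t^2/2))) :=
    Real.continuous_exp.comp (((continuous_pow 2).div_const 2).neg)
  have hGc : Continuous G := hFc.mul hexpc
  have hwm : Measurable w :=
    ((hF'm.sub (measurable_id.mul hFc.measurable)).mul hexpc.measurable)
  have hwb : ∀ t, ‖w t‖ ≤ C * (Real.exp (-(t^2/2)) + 2 * (|t| * Real.exp (-(t^2/2)))
      + t^2 * Real.exp (-(t^2/2))) := by
    intro t
    have he : 0 < Real.exp (-(t^2/2)) := Real.exp_pos _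
    have h1 : |F' t - t * F t| ≤ C + |t| * (C * (1 + |t|)) := by
      calc |F' t - t * F t| ≤ |F' t| + |t * F t| := abs_sub _ _
        _ = |F' t| + |t| * |F t| := by rw [abs_mul]
        _ ≤ C + |t| * (C * (1 + |t|)) := by
            have h2 := hF'b t
            have h3 := mul_le_mul_of_nonneg_left (hFb t) (abs_nonneg t)
            linarith
    have ht2 : |t| * |t| = t^2 := by rw [← sq_abs t]; ring
    calc ‖w t‖ = |F' t - t * F t| * Real.exp (-(t^2/2)) := by
          rw [Real.norm_eq_abs, hwdef]; rw [abs_mul, Real.abs_exp]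
      _ ≤ (C + |t| * (C * (1 + |t|))) * Real.exp (-(t^2/2)) :=
          mul_le_mul_of_nonneg_right h1 he.le
      _ ≤ (C * (1 + 2*|t| + t^2)) * Real.exp (-(t^2/2)) := by
          refine mul_le_mul_of_nonneg_right ?_ he.le
          nlinarith [mul_nonneg hC (abs_nonneg t), ht2]
      _ = C * (Real.exp (-(t^2/2)) + 2 * (|t| * Real.exp (-(t^2/2)))
          + t^2 * Real.exp (-(t^2/2))) := by ring
  have hMint : Integrable (fun t : ℝ => C * (Real.exp (-(t^2/2))
      + 2 * (|t| * Real.exp (-(t^2/2))) + t^2 * Real.exp (-(t^2/2)))) :=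
    (((int_exp_gauss.add (int_abs_exp_gauss.const_mul 2)).add int_sq_exp_gauss).const_mul C)
  have hwint : Integrable w volume :=
    Integrable.mono' hMint hwm.aestronglyMeasurable (ae_of_all _ hwb)
  have hGd : ∀ x, x ∉ u → HasDerivAt G (w x) x := by
    intro x hx
    have hinner : HasDerivAt (fun t : ℝ => -(t^2/2)) (-x) x := by
      have := ((hasDerivAt_pow 2 x).div_const 2).fun_neg
      refine this.congr_deriv ?_
      push_cast; ring
    have hexp : HasDerivAt (fun t : ℝ => Real.exp (-(t^2/2)))
        (Real.exp (-(x^2/2)) * (-x)) x := hinner.exp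
    have := (hFd x hx).fun_mul hexp
    refine this.congr_deriv ?_
    simp only [hwdef]
    ring
  have key : ∀ a b : ℝ, ∫ y in a..b, w y = G b - G a := fun a b =>
    ftc_finite_exceptions hGc hwint hu a b (fun x _ hxu => hGd x hxu)
  have hT1 : Tendsto (fun R : ℝ => ∫ y in (-R)..R, w y) atTop (𝓝 (∫ t, w t)) :=
    intervalIntegral_tendsto_integral hwint tendsto_neg_atTop_atBot tendsto_id
  have hsq : Tendsto (fun R : ℝ => R^2/2) atTop atTop :=
    (tendsto_pow_atTop (by norm_num : (2:ℕ) ≠ 0)).atTop_div_const (by norm_num : (0:ℝ) < 2)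
  have hneg : Tendsto (fun R : ℝ => -(R^2/2)) atTop atBot := tendsto_neg_atBot_iff.mpr hsq
  have T0 : Tendsto (fun R : ℝ => Real.exp (-(R^2/2))) atTop (𝓝 0) := by
    have := Real.tendsto_exp_atBot.comp hneg
    simpa [Function.comp_def] using this
  have T1 : Tendsto (fun R : ℝ => R * Real.exp (-(R^2/2))) atTop (𝓝 0) := by
    have hhalf : Tendsto (fun x : ℝ => Real.exp (-(1/2) * x)) atTop (𝓝 0) := by
      have h1 : Tendsto (fun x : ℝ => (1/2) * x) atTop atTop :=
        (tendsto_id (α := ℝ)).const_mul_atTop (by norm_num : (0:ℝ) < 1/2)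
      have h2 : Tendsto (fun x : ℝ => -((1/2) * x)) atTop atBot := tendsto_neg_atBot_iff.mpr h1
      have := Real.tendsto_exp_atBot.comp h2
      simp only [Function.comp_def, neg_mul] at this ⊢
      exact this
    have h := (rpow_mul_exp_neg_mul_sq_isLittleO_exp_neg (by norm_num : (0:ℝ) < 1/2)
      1).tendsto_zero_of_tendsto hhalf
    have hform : ∀ x : ℝ, -(1/2 : ℝ) * x^2 = -(x^2/2) := fun x => by ring
    simp only [Real.rpow_one, hform] at h
    exact h
  have hz : Tendsto (fun R : ℝ => C * (1+R) * Real.exp (-(R^2/2))) atTop (𝓝 0) := by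
    have h := (T0.add T1).const_mul C
    rw [add_zero, mul_zero] at h
    exact h.congr fun R => by ring
  have hGb : ∀ t, ‖G t‖ ≤ C * (1 + |t|) * Real.exp (-(t^2/2)) := fun t => by
    rw [Real.norm_eq_abs, hGdef]
    rw [abs_mul, Real.abs_exp]
    exact mul_le_mul_of_nonneg_right (hFb t) (Real.exp_pos _).le
  have hGtop : Tendsto G atTop (𝓝 0) := by
    apply squeeze_zero_norm' ?_ hz
    filter_upwards [eventually_ge_atTop (0:ℝ)] with R hR
    calc ‖G R‖ ≤ C * (1 + |R|) * Real.exp (-(R^2/2)) := hGb R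
      _ = C * (1 + R) * Real.exp (-(R^2/2)) := by rw [abs_of_nonneg hR]
  have hGbot : Tendsto (fun R => G (-R)) atTop (𝓝 0) := by
    apply squeeze_zero_norm' ?_ hz
    filter_upwards [eventually_ge_atTop (0:ℝ)] with R hR
    have h := hGb (-R)
    rw [abs_neg, abs_of_nonneg hR, neg_sq] at h
    exact h
  have hT2 : Tendsto (fun R : ℝ => ∫ y in (-R)..R, w y) atTop (𝓝 0) := by
    have h := hGtop.sub hGbot
    rw [sub_zero] at h
    exact h.congr fun R => (key (-R) R).symm
  have hw0 : ∫ t, w t = 0 := tendsto_nhds_unique hT1 hT2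
  rw [integral_gaussianReal_std]
  have hpt : ∀ t, gaussianPDFReal 0 1 t * (t * F t - F' t)
      = (Real.sqrt (2*Real.pi))⁻¹ * (-(w t)) := by
    intro t; rw [gaussianPDFReal_std, hwdef]; ring
  simp only [hpt]
  rw [MeasureTheory.integral_const_mul, MeasureTheory.integral_neg, hw0]
  simp

/-- Scalar bound for the correction term `g`. -/
lemma gJS_bound {lam x S : ℝ} (hlam : 0 ≤ lam) (hx : x^2 ≤ S) :
    |(if lam < S then -(lam*x)/S else -x)| ≤ Real.sqrt lam := by
  have hS0 : 0 ≤ S := le_trans (sq_nonneg x) hx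
  have hxs : |x| ≤ Real.sqrt S := by
    rw [← Real.sqrt_sq_eq_abs]
    exact Real.sqrt_le_sqrt hx
  split_ifs with h
  · have hSpos : 0 < S := lt_of_le_of_lt hlam h
    have hls : Real.sqrt lam ≤ Real.sqrt S := Real.sqrt_le_sqrt h.le
    have h3 : Real.sqrt S * Real.sqrt S = S := Real.mul_self_sqrt hS0
    have h4 : Real.sqrt lam * Real.sqrt lam = lam := Real.mul_self_sqrt hlam
    rw [abs_div, abs_neg, abs_mul, abs_of_nonneg hlam, abs_of_nonneg hS0,
      div_le_iff₀ hSpos]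
    nlinarith [mul_le_mul hls hxs (abs_nonneg x) (Real.sqrt_nonneg S), h3, h4,
      Real.sqrt_nonneg lam, Real.sqrt_nonneg S, abs_nonneg x]
  · push_neg at h
    rw [abs_neg]
    exact hxs.trans (Real.sqrt_le_sqrt h)

/-- Scalar bound for the divergence term `h`. -/
lemma hJS_bound {lam x S : ℝ} (hlam : 0 ≤ lam) (hx : x^2 ≤ S) :
    |(if lam < S then 2*lam*x^2/S^2 - lam/S else -1)| ≤ 3 := by
  split_ifs with h
  · have hSpos : 0 < S := lt_of_le_of_lt hlam h
    have e1 : 2*lam*x^2/S^2 ≤ 2 := by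
      rw [div_le_iff₀ (by positivity)]
      nlinarith
    have e2 : lam/S ≤ 1 := by
      rw [div_le_one hSpos]; exact h.le
    have p1 : 0 ≤ 2*lam*x^2/S^2 := by positivity
    have p2 : 0 ≤ lam/S := by positivity
    rw [abs_le]
    constructor <;> nlinarith
  · norm_num

/-- One-dimensional combined Stein/variance identity for the James–Stein correction. -/
lemma oneDim (lam : ℝ) (hlam : 0 ≤ lam) (a c : ℝ) (hc : 0 ≤ c) :
    ∫ t, (t^2 - 1
      + 2*t*(if lam < (a+t)^2 + c then -(lam*(a+t))/((a+t)^2 + c) else -(a+t))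
      - 2*(if lam < (a+t)^2 + c then 2*lam*(a+t)^2/((a+t)^2+c)^2 - lam/((a+t)^2+c) else -1))
      ∂(gaussianReal 0 1) = 0 := by
  set f : ℝ → ℝ := fun t =>
    if lam < (a+t)^2 + c then -(lam*(a+t))/((a+t)^2 + c) else -(a+t) with hf
  set h : ℝ → ℝ := fun t =>
    if lam < (a+t)^2 + c then 2*lam*(a+t)^2/((a+t)^2+c)^2 - lam/((a+t)^2+c) else -1 with hh
  have hSc : Continuous (fun t : ℝ => (a+t)^2 + c) := by continuity
  have hx2 : ∀ t : ℝ, (a+t)^2 ≤ (a+t)^2 + c := fun t => le_add_of_nonneg_right hc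
  -- the exceptional set
  set u : Set ℝ := {t | (a+t)^2 + c = lam} with hu
  have hufin : u.Finite := by
    apply Set.Finite.subset
      ((Set.finite_singleton (-Real.sqrt (lam - c) - a)).insert (Real.sqrt (lam - c) - a))
    intro t ht
    have h1 : (a+t)^2 = lam - c := by
      have h' : (a+t)^2 + c = lam := ht
      linarith
    have h2 : Real.sqrt (lam - c) = |a+t| := by rw [← h1, Real.sqrt_sq_eq_abs]
    simp only [Set.mem_insert_iff, Set.mem_singleton_iff]
    rcases abs_cases (a+t) with ⟨h3, _⟩ | ⟨h3, _⟩
    · left; rw [h2, h3]; ring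
    · right; rw [h2, h3]; ring
  -- continuity of f
  have hfglob : ∀ t, f t = -(min lam ((a+t)^2 + c) * (a+t)) / ((a+t)^2 + c) := by
    intro t
    simp only [hf]
    split_ifs with hl
    · rw [min_eq_left hl.le]
    · push_neg at hl
      rw [min_eq_right hl]
      rcases eq_or_lt_of_le (show (0:ℝ) ≤ (a+t)^2 + c by positivity) with h0 | h0
      · have hat : a + t = 0 := by nlinarith [sq_nonneg (a+t)]
        rw [hat]
        simp
      · field_simp
  have hfc : Continuous f := by
    rw [continuous_iff_continuousAt]
    intro t0
    rcases lt_or_ge 0 ((a+t0)^2 + c) with hpos | hz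
    · have : f = fun t => -(min lam ((a+t)^2 + c) * (a+t)) / ((a+t)^2 + c) := funext hfglob
      rw [this]
      exact ContinuousAt.div
        (((continuous_const.min hSc).mul (continuous_const.add continuous_id)).neg.continuousAt)
        hSc.continuousAt (ne_of_gt hpos)
    · -- (a+t0)^2 + c ≤ 0, hence = 0, c = 0, a + t0 = 0
      have hc0 : c = 0 := le_antisymm (by nlinarith [sq_nonneg (a+t0)]) hc
      have hat0 : a + t0 = 0 := by nlinarith [sq_nonneg (a+t0)]
      rcases eq_or_lt_of_le hlam with hl0 | hlpos
      · -- lam = 0 : f ≡ 0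
        have hf0 : ∀ t, f t = 0 := by
          intro t
          simp only [hf]
          split_ifs with hl
          · rw [← hl0]; simp
          · push_neg at hl
            rw [← hl0] at hl
            have : a + t = 0 := by nlinarith [sq_nonneg (a+t), hc]
            rw [this]; ring
        have : f = fun _ => 0 := funext hf0
        rw [this]
        exact continuousAt_const
      · -- lam > 0, S t0 = 0 < lam : locally f = -(a+t)
        have hopen : IsOpen {t : ℝ | (a+t)^2 + c < lam} := isOpen_lt hSc continuous_const
        have hmem : t0 ∈ {t : ℝ | (a+t)^2 + c < lam} := by
          simp only [Set.mem_setOf_eq, hat0, hc0]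
          simpa using hlpos
        have hev : f =ᶠ[𝓝 t0] (fun t => -(a+t)) := by
          filter_upwards [hopen.mem_nhds hmem] with t ht
          simp only [hf]
          rw [if_neg (not_lt.mpr (le_of_lt ht))]
        exact ((continuous_const.add continuous_id).neg.continuousAt).congr hev.symm
  -- derivative of f off u
  have hfd : ∀ t ∉ u, HasDerivAt f (h t) t := by
    intro t htu
    have htne : (a+t)^2 + c ≠ lam := htu
    rcases lt_or_ge lam ((a+t)^2 + c) with hgt | hle
    · have hS0 : (a+t)^2 + c ≠ 0 := ne_of_gt (lt_of_le_of_lt hlam hgt)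
      have hopen : IsOpen {s : ℝ | lam < (a+s)^2 + c} := isOpen_lt continuous_const hSc
      have hev : f =ᶠ[𝓝 t] (fun s => -(lam*(a+s))/((a+s)^2 + c)) := by
        filter_upwards [hopen.mem_nhds hgt] with s hs
        simp only [hf]
        rw [if_pos hs]
      have hid : HasDerivAt (fun s : ℝ => a + s) 1 t := by
        simpa using (hasDerivAt_id t).const_add a
      have hnum : HasDerivAt (fun s : ℝ => -(lam*(a+s))) (-lam) t := by
        have := (hid.const_mul lam).fun_neg
        refine this.congr_deriv ?_
        ring
      have hden : HasDerivAt (fun s : ℝ => (a+s)^2 + c) (2*(a+t)) t := by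
        have := (hid.fun_pow 2).add_const c
        refine this.congr_deriv ?_
        push_cast; ring
      have hder := hnum.div hden hS0
      have : HasDerivAt f ((-lam * ((a+t)^2 + c) - -(lam*(a+t)) * (2*(a+t))) / ((a+t)^2 + c)^2) t :=
        hder.congr_of_eventuallyEq hev
      convert this using 1
      simp only [hh]
      rw [if_pos hgt]
      field_simp
      ring
    · have hlt : (a+t)^2 + c < lam := lt_of_le_of_ne hle htne
      have hopen : IsOpen {s : ℝ | (a+s)^2 + c < lam} := isOpen_lt hSc continuous_const
      have hev : f =ᶠ[𝓝 t] (fun s => -(a+s)) := by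
        filter_upwards [hopen.mem_nhds hlt] with s hs
        simp only [hf]
        rw [if_neg (not_lt.mpr (le_of_lt hs))]
      have hder : HasDerivAt (fun s : ℝ => -(a+s)) (-1) t := by
        have hid : HasDerivAt (fun s : ℝ => a + s) 1 t := by
          simpa using (hasDerivAt_id t).const_add a
        exact hid.fun_neg
      have : HasDerivAt f (-1) t := hder.congr_of_eventuallyEq hev
      convert this using 1
      simp only [hh]
      rw [if_neg (not_lt.mpr hle)]
  -- measurability of h
  have hm1 : Measurable (fun t : ℝ => (a+t)^2 + c) := hSc.measurable
  have hhm : Measurable h := by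
    apply Measurable.ite (measurableSet_lt measurable_const hm1)
    · exact ((measurable_const.mul ((measurable_const.add measurable_id).pow_const 2)).div
        (hm1.pow_const 2)).sub (measurable_const.div hm1)
    · exact measurable_const
  -- bounds
  have hfb : ∀ t, |f t| ≤ Real.sqrt lam := fun t => by
    simp only [hf]; exact gJS_bound hlam (hx2 t)
  have hhb : ∀ t, |h t| ≤ 3 := fun t => by
    simp only [hh]; exact hJS_bound hlam (hx2 t)
  set C := 7 + 2 * Real.sqrt lam with hCdef
  have hsq0 : 0 ≤ Real.sqrt lam := Real.sqrt_nonneg lam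
  have hFb : ∀ t, |t + 2 * f t| ≤ C * (1 + |t|) := by
    intro t
    have h1 : |t + 2 * f t| ≤ |t| + 2 * |f t| := by
      calc |t + 2*f t| ≤ |t| + |2*f t| := abs_add_le _ _
        _ = |t| + 2*|f t| := by rw [abs_mul]; norm_num
    have h2 := hfb t
    have habs := abs_nonneg t
    have habsf := abs_nonneg (f t)
    simp only [hCdef]
    nlinarith
  have hF'b : ∀ t, |1 + 2 * h t| ≤ C := by
    intro t
    have h1 : |1 + 2*h t| ≤ 1 + 2*|h t| := by
      calc |(1:ℝ) + 2*h t| ≤ |(1:ℝ)| + |2*h t| := abs_add_le _ _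
        _ = 1 + 2*|h t| := by rw [abs_mul]; norm_num
    have h2 := hhb t
    simp only [hCdef]
    nlinarith
  have hFd : ∀ t ∉ u, HasDerivAt (fun s => s + 2 * f s) (1 + 2 * h t) t := by
    intro t htu
    have h1 := (hfd t htu).const_mul (2:ℝ)
    have h2 := (hasDerivAt_id t).add h1
    exact h2
  have hkey := stein_gauss (F := fun t => t + 2 * f t) (F' := fun t => 1 + 2 * h t) hufin
    (continuous_id.add (continuous_const.mul hfc)) hFd
    (measurable_const.add (hhm.const_mul 2)) hFb hF'b
  have hrw : (fun t : ℝ => t^2 - 1 + 2*t*f t - 2*h t)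
      = fun t => t * (t + 2 * f t) - (1 + 2 * h t) := funext fun t => by ring
  show ∫ t, (t^2 - 1 + 2*t*f t - 2*h t) ∂(gaussianReal 0 1) = 0
  rw [hrw]
  exact hkey

/-- Integrability of the quadratic dominating function under the Gaussian. -/
lemma integrable_quad_gauss (b : ℝ) :
    Integrable (fun t : ℝ => t^2 + b*|t| + 7) (gaussianReal 0 1) := by
  rw [integrable_gaussianReal_iff]
  have h := ((int_sq_exp_gauss.const_mul ((Real.sqrt (2*Real.pi))⁻¹)).add
    ((int_abs_exp_gauss.const_mul (b * (Real.sqrt (2*Real.pi))⁻¹)))).add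
    (int_exp_gauss.const_mul (7 * (Real.sqrt (2*Real.pi))⁻¹))
  refine h.congr (ae_of_all _ fun t => ?_)
  simp only [Pi.add_apply]
  rw [gaussianPDFReal_std]
  ring

noncomputable def gJS (lam : ℝ) {L : ℕ} (μ : Fin L → ℝ) (i : Fin L) (z : Fin L → ℝ) : ℝ :=
  if lam < ∑ j, (μ j + z j)^2 then
    -(lam * (μ i + z i))/(∑ j, (μ j + z j)^2) else -(μ i + z i)

noncomputable def hJS (lam : ℝ) {L : ℕ} (μ : Fin L → ℝ) (i : Fin L) (z : Fin L → ℝ) : ℝ :=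
  if lam < ∑ j, (μ j + z j)^2 then
    2*lam*(μ i + z i)^2/(∑ j, (μ j + z j)^2)^2 - lam/(∑ j, (μ j + z j)^2) else -1

noncomputable def ΦJS (lam : ℝ) {L : ℕ} (μ : Fin L → ℝ) (i : Fin L) (z : Fin L → ℝ) : ℝ :=
  (z i)^2 - 1 + 2 * z i * gJS lam μ i z - 2 * hJS lam μ i z




lemma measurable_SJS {L : ℕ} (μ : Fin L → ℝ) :
    Measurable (fun z : Fin L → ℝ => ∑ j, (μ j + z j)^2) :=
  Finset.measurable_sum _ fun j _ => ((measurable_const.add (measurable_pi_apply j)).pow_const 2)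

lemma measurable_ΦJS (lam : ℝ) {L : ℕ} (μ : Fin L → ℝ) (i : Fin L) :
    Measurable (ΦJS lam μ i) := by
  have hS := measurable_SJS μ
  have hcond : MeasurableSet {z : Fin L → ℝ | lam < ∑ j, (μ j + z j)^2} :=
    measurableSet_lt measurable_const hS
  have hxm : Measurable (fun z : Fin L → ℝ => μ i + z i) :=
    measurable_const.add (measurable_pi_apply i)
  have hg : Measurable (gJS lam μ i) :=
    Measurable.ite hcond ((measurable_const.mul hxm).neg.div hS) hxm.neg
  have hh : Measurable (hJS lam μ i) :=
    Measurable.ite hcond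
      (((measurable_const.mul (hxm.pow_const 2)).div (hS.pow_const 2)).sub
        (measurable_const.div hS)) measurable_const
  exact ((((measurable_pi_apply i).pow_const 2).sub measurable_const).add
    ((measurable_const.mul (measurable_pi_apply i)).mul hg)).sub (measurable_const.mul hh)

lemma bound_ΦJS (lam : ℝ) (hlam : 0 ≤ lam) {L : ℕ} (μ : Fin L → ℝ) (i : Fin L)
    (z : Fin L → ℝ) : |ΦJS lam μ i z| ≤ (z i)^2 + 2*Real.sqrt lam*|z i| + 7 := by
  have hx2 : (μ i + z i)^2 ≤ ∑ j, (μ j + z j)^2 :=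
    Finset.single_le_sum (f := fun j => (μ j + z j)^2) (fun j _ => sq_nonneg _) (Finset.mem_univ i)
  have hg : |gJS lam μ i z| ≤ Real.sqrt lam := gJS_bound hlam hx2
  have hh : |hJS lam μ i z| ≤ 3 := hJS_bound hlam hx2
  have h1 : |ΦJS lam μ i z| ≤ |(z i)^2 - 1 + 2 * z i * gJS lam μ i z| + |2 * hJS lam μ i z| :=
    abs_sub _ _
  have h2 : |(z i)^2 - 1 + 2 * z i * gJS lam μ i z| ≤ |(z i)^2 - 1| + |2 * z i * gJS lam μ i z| :=
    abs_add_le _ _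
  have h3 : |(z i)^2 - 1| ≤ (z i)^2 + 1 := by
    have := abs_sub ((z i)^2) (1:ℝ)
    simpa [abs_of_nonneg (sq_nonneg (z i))] using this
  have h4 : |2 * z i * gJS lam μ i z| = 2 * |z i| * |gJS lam μ i z| := by
    rw [abs_mul, abs_mul]; norm_num
  have h5 : |2 * hJS lam μ i z| = 2 * |hJS lam μ i z| := by
    rw [abs_mul]; norm_num
  have h6 : 2 * |z i| * |gJS lam μ i z| ≤ 2 * |z i| * Real.sqrt lam :=
    mul_le_mul_of_nonneg_left hg (by positivity)
  nlinarith [abs_nonneg (z i)]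



/-- Pointwise algebraic identity reducing the risk integrand to the SURE integrand plus
the per-coordinate Stein integrands. -/
lemma key_alg {L : ℕ} (μ : Fin L → ℝ) (lam : ℝ) (hlam : 0 ≤ lam) (z : Fin L → ℝ) :
    (∑ i, ((max (1 - lam / (∑ j, (μ j + z j)^2)) 0) * (μ i + z i) - μ i)^2)
      = ((L : ℝ)
          + (if lam < ∑ j, (μ j + z j)^2 then
              (lam^2 - 2*lam*((L:ℝ)-2))/(∑ j, (μ j + z j)^2) else 0)
          + (if (∑ j, (μ j + z j)^2) ≤ lam then (∑ j, (μ j + z j)^2) - 2*(L:ℝ) else 0))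
        + ∑ i, ΦJS lam μ i z := by
  set S := ∑ j, (μ j + z j)^2 with hS
  have hx2 : ∀ i, (μ i + z i)^2 ≤ S := fun i =>
    Finset.single_le_sum (f := fun j => (μ j + z j)^2) (fun j _ => sq_nonneg _)
      (Finset.mem_univ i)
  have hS0 : 0 ≤ S := Finset.sum_nonneg fun j _ => sq_nonneg _
  rcases lt_or_ge lam S with hgt | hle
  · have hSpos : 0 < S := lt_of_le_of_lt hlam hgt
    have hSne : S ≠ 0 := ne_of_gt hSpos
    rw [if_pos hgt, if_neg (not_le.mpr hgt)]
    have hmax : max (1 - lam / S) 0 = 1 - lam / S :=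
      max_eq_left (by rw [sub_nonneg, div_le_one hSpos]; exact hgt.le)
    simp only [hmax, ΦJS, gJS, hJS, ← hS, if_pos hgt]
    have e1 : ∀ i, ((1 - lam / S)*(μ i + z i) - μ i)^2
        = z i^2 - (2*(lam/S))*(z i*(μ i + z i)) + (lam^2/S^2)*((μ i + z i)^2) := by
      intro i; field_simp; ring
    have e2 : ∀ i, (z i^2 - 1 + 2*z i*(-(lam*(μ i + z i))/S)
          - 2*(2*lam*(μ i + z i)^2/S^2 - lam/S))
        = z i^2 - (2*(lam/S))*(z i*(μ i+z i)) - (4*lam/S^2)*((μ i + z i)^2)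
          + (2*lam/S - 1) := by
      intro i; field_simp; ring
    simp only [e1, e2]
    simp only [Finset.sum_add_distrib, Finset.sum_sub_distrib, ← Finset.mul_sum,
      Finset.sum_const, Finset.card_univ, Fintype.card_fin, nsmul_eq_mul, ← hS]
    field_simp
    ring
  · rw [if_neg (not_lt.mpr hle), if_pos hle]
    have hmx : ∀ i, max (1 - lam / S) 0 * (μ i + z i) = 0 := by
      intro i
      rcases eq_or_lt_of_le hS0 with h0 | hpos
      · have h1 : (μ i + z i)^2 ≤ 0 := by rw [h0]; exact hx2 i
        have h2 : μ i + z i = 0 := by nlinarith [sq_nonneg (μ i + z i)]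
        rw [h2, mul_zero]
      · have h1 : (1:ℝ) ≤ lam / S := (one_le_div hpos).mpr hle
        rw [max_eq_right (by linarith), zero_mul]
    simp only [hmx, ΦJS, gJS, hJS, ← hS, if_neg (not_lt.mpr hle)]
    have e1 : ∀ i, ((0:ℝ) - μ i)^2 = (μ i + z i)^2 - 2*(z i*(μ i + z i)) + z i^2 :=
      fun i => by ring
    have e2 : ∀ i, (z i^2 - 1 + 2*z i*(-(μ i + z i)) - 2*(-1:ℝ))
        = z i^2 - 2*(z i*(μ i+z i)) + 1 := fun i => by ring
    simp only [e1, e2]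
    simp only [Finset.sum_add_distrib, Finset.sum_sub_distrib, ← Finset.mul_sum,
      Finset.sum_const, Finset.card_univ, Fintype.card_fin, nsmul_eq_mul, ← hS]
    ring




/-- Transport of the per-coordinate integrand along `insertNth`. -/
lemma ΦJS_insertNth {n : ℕ} (μ : Fin (n+1) → ℝ) (lam : ℝ) (i : Fin (n+1))
    (t : ℝ) (w : Fin n → ℝ) :
    ΦJS lam μ i (i.insertNth t w)
      = t^2 - 1
        + 2*t*(if lam < (μ i + t)^2 + (∑ j, (μ (i.succAbove j) + w j)^2) then
            -(lam*(μ i + t))/((μ i + t)^2 + (∑ j, (μ (i.succAbove j) + w j)^2))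
          else -(μ i + t))
        - 2*(if lam < (μ i + t)^2 + (∑ j, (μ (i.succAbove j) + w j)^2) then
            2*lam*(μ i + t)^2/((μ i + t)^2 + (∑ j, (μ (i.succAbove j) + w j)^2))^2
              - lam/((μ i + t)^2 + (∑ j, (μ (i.succAbove j) + w j)^2))
          else -1) := by
  have hS : (∑ j, (μ j + (i.insertNth t w : Fin (n+1) → ℝ) j)^2)
      = (μ i + t)^2 + (∑ j, (μ (i.succAbove j) + w j)^2) := by
    rw [Fin.sum_univ_succAbove _ i]
    simp [Fin.insertNth_apply_same, Fin.insertNth_apply_succAbove]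
  simp only [ΦJS, gJS, hJS, hS, Fin.insertNth_apply_same]

/-- The per-coordinate Stein integrand is integrable with integral zero. -/
lemma ΦJS_integral {n : ℕ} (μ : Fin (n+1) → ℝ) (lam : ℝ) (hlam : 0 ≤ lam) (i : Fin (n+1)) :
    Integrable (ΦJS lam μ i) (Measure.pi fun _ : Fin (n+1) => gaussianReal 0 1) ∧
    ∫ z, ΦJS lam μ i z ∂(Measure.pi fun _ : Fin (n+1) => gaussianReal 0 1) = 0 := by
  set γ1 := gaussianReal 0 1 with hγ1
  set γn := Measure.pi fun _ : Fin n => γ1 with hγn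
  set γL := Measure.pi fun _ : Fin (n+1) => γ1 with hγL
  have mp := measurePreserving_piFinSuccAbove (fun _ : Fin (n+1) => γ1) i
  set e := MeasurableEquiv.piFinSuccAbove (fun _ : Fin (n+1) => ℝ) i with he
  set Ψ : ℝ × (Fin n → ℝ) → ℝ := fun p => ΦJS lam μ i (i.insertNth p.1 p.2) with hΨ
  have hesymm : ∀ p : ℝ × (Fin n → ℝ), e.symm p = i.insertNth p.1 p.2 := fun p => rfl
  have hcomp : ∀ z, Ψ (e z) = ΦJS lam μ i z := by
    intro z
    show ΦJS lam μ i (i.insertNth (e z).1 (e z).2) = ΦJS lam μ i z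
    have : i.insertNth (e z).1 (e z).2 = z := by
      show i.insertNth (z i) (i.removeNth z) = z
      exact Fin.insertNth_self_removeNth i z
    rw [this]
  have hΨm : Measurable Ψ := by
    have : Ψ = (ΦJS lam μ i) ∘ e.symm := by
      funext p; rw [Function.comp_apply, hesymm]
    rw [this]
    exact (measurable_ΦJS lam μ i).comp e.symm.measurable
  have hΨb : ∀ p : ℝ × (Fin n → ℝ), ‖Ψ p‖ ≤ p.1^2 + 2*Real.sqrt lam*|p.1| + 7 := by
    intro p
    rw [Real.norm_eq_abs]
    have := bound_ΦJS lam hlam μ i (i.insertNth p.1 p.2)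
    rwa [Fin.insertNth_apply_same] at this
  have hfstmp : MeasurePreserving Prod.fst (γ1.prod γn) γ1 := by
    refine ⟨measurable_fst, ?_⟩
    rw [Measure.map_fst_prod]
    simp
  have hD : Integrable (fun t : ℝ => t^2 + 2*Real.sqrt lam*|t| + 7) γ1 :=
    integrable_quad_gauss (2*Real.sqrt lam)
  have hDprod : Integrable (fun p : ℝ × (Fin n → ℝ) => p.1^2 + 2*Real.sqrt lam*|p.1| + 7)
      (γ1.prod γn) := by
    have := (hfstmp.integrable_comp hD.aestronglyMeasurable).mpr hD
    simpa [Function.comp_def] using this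
  have hΨint : Integrable Ψ (γ1.prod γn) :=
    Integrable.mono' hDprod hΨm.aestronglyMeasurable (ae_of_all _ hΨb)
  have hint : Integrable (ΦJS lam μ i) γL := by
    have h1 : Integrable (Ψ ∘ e) γL := (mp.integrable_comp hΨm.aestronglyMeasurable).mpr hΨint
    exact h1.congr (ae_of_all _ fun z => hcomp z)
  refine ⟨hint, ?_⟩
  calc ∫ z, ΦJS lam μ i z ∂γL = ∫ z, Ψ (e z) ∂γL := by
        refine integral_congr_ae (ae_of_all _ fun z => ?_)
        exact (hcomp z).symm
    _ = ∫ p, Ψ p ∂(γ1.prod γn) := mp.integral_comp e.measurableEmbedding Ψ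
    _ = ∫ w, ∫ t, Ψ (t, w) ∂γ1 ∂γn := integral_prod_symm Ψ hΨint
    _ = 0 := by
        have hzero : ∀ w : Fin n → ℝ, ∫ t, Ψ (t, w) ∂γ1 = 0 := by
          intro w
          have hc : 0 ≤ ∑ j, (μ (i.succAbove j) + w j)^2 :=
            Finset.sum_nonneg fun j _ => sq_nonneg _
          have h1 := oneDim lam hlam (μ i) (∑ j, (μ (i.succAbove j) + w j)^2) hc
          have h2 : (fun t => Ψ (t, w)) = fun t =>
              (t^2 - 1
                + 2*t*(if lam < (μ i + t)^2 + (∑ j, (μ (i.succAbove j) + w j)^2) then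
                    -(lam*(μ i + t))/((μ i + t)^2 + (∑ j, (μ (i.succAbove j) + w j)^2))
                  else -(μ i + t))
                - 2*(if lam < (μ i + t)^2 + (∑ j, (μ (i.succAbove j) + w j)^2) then
                    2*lam*(μ i + t)^2/((μ i + t)^2 + (∑ j, (μ (i.succAbove j) + w j)^2))^2
                      - lam/((μ i + t)^2 + (∑ j, (μ (i.succAbove j) + w j)^2))
                  else -1)) := funext fun t => ΦJS_insertNth μ lam i t w
          rw [hγ1, show (fun t => Ψ (t, w)) = _ from h2]
          exact h1
        simp only [hzero, MeasureTheory.integral_zero]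




/-- Integrability of the SURE integrand (it is bounded). -/
lemma integrable_B {L : ℕ} (μ : Fin L → ℝ) (lam : ℝ) (hlam : 0 ≤ lam) :
    Integrable (fun z : Fin L → ℝ =>
      ((L : ℝ)
        + (if lam < ∑ j, (μ j + z j)^2 then
            (lam^2 - 2*lam*((L:ℝ)-2))/(∑ j, (μ j + z j)^2) else 0)
        + (if (∑ j, (μ j + z j)^2) ≤ lam then (∑ j, (μ j + z j)^2) - 2*(L:ℝ) else 0)))
      (Measure.pi fun _ : Fin L => gaussianReal 0 1) := by
  have hS := measurable_SJS μ
  have hc1 : MeasurableSet {z : Fin L → ℝ | lam < ∑ j, (μ j + z j)^2} :=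
    measurableSet_lt measurable_const hS
  have hc2 : MeasurableSet {z : Fin L → ℝ | (∑ j, (μ j + z j)^2) ≤ lam} :=
    measurableSet_le hS measurable_const
  have hmeas : Measurable (fun z : Fin L → ℝ =>
      ((L : ℝ)
        + (if lam < ∑ j, (μ j + z j)^2 then
            (lam^2 - 2*lam*((L:ℝ)-2))/(∑ j, (μ j + z j)^2) else 0)
        + (if (∑ j, (μ j + z j)^2) ≤ lam then (∑ j, (μ j + z j)^2) - 2*(L:ℝ) else 0))) := by
    refine (measurable_const.add (Measurable.ite hc1 (measurable_const.div hS)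
      measurable_const)).add (Measurable.ite hc2 (hS.sub measurable_const) measurable_const)
  refine Integrable.mono' (integrable_const ((L:ℝ) + |lam - 2*((L:ℝ)-2)| + (lam + 2*(L:ℝ))))
    hmeas.aestronglyMeasurable (ae_of_all _ fun z => ?_)
  rw [Real.norm_eq_abs]
  set S := ∑ j, (μ j + z j)^2 with hSdef
  have hS0 : 0 ≤ S := Finset.sum_nonneg fun j _ => sq_nonneg _
  have hL0 : (0:ℝ) ≤ (L:ℝ) := Nat.cast_nonneg L
  rcases lt_or_ge lam S with h1 | h1
  · -- lam < S
    rw [if_pos h1, if_neg (not_le.mpr h1), add_zero]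
    have hSpos : 0 < S := lt_of_le_of_lt hlam h1
    have hq : (lam^2 - 2*lam*((L:ℝ)-2))/S = (lam/S) * (lam - 2*((L:ℝ)-2)) := by
      field_simp
    have h01 : 0 ≤ lam/S := by positivity
    have h11 : lam/S ≤ 1 := by rw [div_le_one hSpos]; exact h1.le
    have habs : |(lam^2 - 2*lam*((L:ℝ)-2))/S| ≤ |lam - 2*((L:ℝ)-2)| := by
      rw [hq, abs_mul, abs_of_nonneg h01]
      nlinarith [abs_nonneg (lam - 2*((L:ℝ)-2))]
    calc |(L:ℝ) + (lam^2 - 2*lam*((L:ℝ)-2))/S|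
        ≤ |(L:ℝ)| + |(lam^2 - 2*lam*((L:ℝ)-2))/S| := abs_add_le _ _
      _ ≤ (L:ℝ) + |lam - 2*((L:ℝ)-2)| := by
          rw [abs_of_nonneg hL0]; linarith
      _ ≤ (L:ℝ) + |lam - 2*((L:ℝ)-2)| + (lam + 2*(L:ℝ)) := by linarith
  · -- S ≤ lam
    rw [if_neg (not_lt.mpr h1), if_pos h1]
    have habs2 : |S - 2*(L:ℝ)| ≤ lam + 2*(L:ℝ) := by
      rw [abs_le]; constructor <;> nlinarith
    calc |(L:ℝ) + 0 + (S - 2*(L:ℝ))|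
        ≤ |(L:ℝ) + 0| + |S - 2*(L:ℝ)| := abs_add_le _ _
      _ ≤ (L:ℝ) + (lam + 2*(L:ℝ)) := by
          rw [add_zero, abs_of_nonneg hL0]; linarith
      _ ≤ (L:ℝ) + |lam - 2*((L:ℝ)-2)| + (lam + 2*(L:ℝ)) := by
          have := abs_nonneg (lam - 2*((L:ℝ)-2)); linarith

theorem sure_unbiased_blockwise_james_stein (L : ℕ) (hL : 1 ≤ L) (μ : Fin L → ℝ)
    (lam : ℝ) (hlam : 0 ≤ lam) :
    (∫ z : Fin L → ℝ,
        (∑ i, ((max (1 - lam / (∑ j, (μ j + z j) ^ 2)) 0) * (μ i + z i) - μ i) ^ 2)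
        ∂(Measure.pi fun _ : Fin L => gaussianReal 0 1)) =
      ∫ z : Fin L → ℝ,
        ((L : ℝ) +
          (if lam < ∑ j, (μ j + z j) ^ 2 then
            (lam ^ 2 - 2 * lam * ((L : ℝ) - 2)) / (∑ j, (μ j + z j) ^ 2) else 0) +
          (if (∑ j, (μ j + z j) ^ 2) ≤ lam then (∑ j, (μ j + z j) ^ 2) - 2 * (L : ℝ) else 0))
        ∂(Measure.pi fun _ : Fin L => gaussianReal 0 1) := by
  obtain ⟨n, rfl⟩ : ∃ n, L = n + 1 := ⟨L - 1, (Nat.succ_pred_eq_of_pos hL).symm⟩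
  set γL := Measure.pi fun _ : Fin (n+1) => gaussianReal 0 1 with hγL
  have hΦ := fun i => ΦJS_integral μ lam hlam i
  calc ∫ z : Fin (n+1) → ℝ,
        (∑ i, ((max (1 - lam / (∑ j, (μ j + z j) ^ 2)) 0) * (μ i + z i) - μ i) ^ 2) ∂γL
      = ∫ z : Fin (n+1) → ℝ,
        ((((n+1 : ℕ) : ℝ)
          + (if lam < ∑ j, (μ j + z j)^2 then
              (lam^2 - 2*lam*((((n+1 : ℕ)):ℝ)-2))/(∑ j, (μ j + z j)^2) else 0)
          + (if (∑ j, (μ j + z j)^2) ≤ lam then (∑ j, (μ j + z j)^2) - 2*(((n+1 : ℕ)):ℝ) else 0))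
        + ∑ i, ΦJS lam μ i z) ∂γL := by
        refine integral_congr_ae (ae_of_all _ fun z => ?_)
        exact key_alg μ lam hlam z
    _ = (∫ z : Fin (n+1) → ℝ,
        ((((n+1 : ℕ)) : ℝ)
          + (if lam < ∑ j, (μ j + z j)^2 then
              (lam^2 - 2*lam*((((n+1 : ℕ)):ℝ)-2))/(∑ j, (μ j + z j)^2) else 0)
          + (if (∑ j, (μ j + z j)^2) ≤ lam then (∑ j, (μ j + z j)^2) - 2*(((n+1 : ℕ)):ℝ) else 0)) ∂γL)
        + ∫ z : Fin (n+1) → ℝ, (∑ i, ΦJS lam μ i z) ∂γL := by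
        exact integral_add (integrable_B μ lam hlam)
          (integrable_finset_sum _ fun i _ => (hΦ i).1)
    _ = ∫ z : Fin (n+1) → ℝ,
        ((((n+1 : ℕ)) : ℝ)
          + (if lam < ∑ j, (μ j + z j)^2 then
              (lam^2 - 2*lam*((((n+1 : ℕ)):ℝ)-2))/(∑ j, (μ j + z j)^2) else 0)
          + (if (∑ j, (μ j + z j)^2) ≤ lam then (∑ j, (μ j + z j)^2) - 2*(((n+1 : ℕ)):ℝ) else 0)) ∂γL := by
        rw [integral_finset_sum _ fun i _ => (hΦ i).1,
          Finset.sum_eq_zero fun i _ => (hΦ i).2, add_zero]
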